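/- Let α, β > 0 with αβ ∈ (0,1) and set C̄ = (1−αβ)I_n + αβ R̄ and C = C̄ ⊗ I_p. Then C̄^k → 1_n π^T as k → ∞, and there exist a norm N on ℝ^{np} satisfying ‖z‖ ≤ N(z) for all z ∈ ℝ^{np} (where ‖·‖ is the Euclidean norm) and a constant σ ∈ (0,1) such that N(Cz − V_∞ z) ≤ σ · N(z − V_∞ z) for every z ∈ ℝ^{np}. -/

import Mathlib

open Matrix Filter
open scoped Kronecker

noncomputable section

/-- Euclidean norm on `ι → ℝ`. -/
def eucNorm {ι : Type*} [Fintype ι] (z : ι → ℝ) : ℝ := Real.sqrt (∑ i, z i ^ 2)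

/-- Spectral norm (operator 2-norm) of a square real matrix. -/
def specNorm {ι : Type*} [Fintype ι] (A : Matrix ι ι ℝ) : ℝ :=
  sSup {c : ℝ | ∃ z : ι → ℝ, eucNorm z ≤ 1 ∧ c = eucNorm (A.mulVec z)}

/-- Matrix norm induced by a vector norm `N`: `sup_{z ≠ 0} N (A z) / N z`. -/
def opNorm {ι : Type*} [Fintype ι] (N : (ι → ℝ) → ℝ) (A : Matrix ι ι ℝ) : ℝ :=
  sSup {c : ℝ | ∃ z : ι → ℝ, z ≠ 0 ∧ c = N (A.mulVec z) / N z}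

/-- `g` is the gradient of `f : ℝ^p → ℝ`. -/
def IsGradient {p : ℕ} (f : (Fin p → ℝ) → ℝ) (g : (Fin p → ℝ) → Fin p → ℝ) : Prop :=
  ∀ x, HasFDerivAt f (∑ j, g x j • (ContinuousLinearMap.proj j : (Fin p → ℝ) →L[ℝ] ℝ)) x

/-- `R = R̄ ⊗ I_p`. -/
def RK (n p : ℕ) (Rb : Matrix (Fin n) (Fin n) ℝ) :
    Matrix (Fin n × Fin p) (Fin n × Fin p) ℝ :=
  Rb ⊗ₖ (1 : Matrix (Fin p) (Fin p) ℝ)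

/-- `V_∞ = (1_n π^T) ⊗ I_p`. -/
def VinfK (n p : ℕ) (π : Fin n → ℝ) :
    Matrix (Fin n × Fin p) (Fin n × Fin p) ℝ :=
  (Matrix.of (fun _ j => π j) : Matrix (Fin n) (Fin n) ℝ) ⊗ₖ (1 : Matrix (Fin p) (Fin p) ℝ)

/-- `V(k) = R̄^k ⊗ I_p`. -/
def VK (n p : ℕ) (Rb : Matrix (Fin n) (Fin n) ℝ) (k : ℕ) :
    Matrix (Fin n × Fin p) (Fin n × Fin p) ℝ :=
  (Rb ^ k) ⊗ₖ (1 : Matrix (Fin p) (Fin p) ℝ)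

/-- `Ṽ(k)⁻¹ = diag(((R̄^k)_{11})⁻¹, …, ((R̄^k)_{nn})⁻¹) ⊗ I_p`. -/
def VtinvK (n p : ℕ) (Rb : Matrix (Fin n) (Fin n) ℝ) (k : ℕ) :
    Matrix (Fin n × Fin p) (Fin n × Fin p) ℝ :=
  Matrix.diagonal (fun q => ((Rb ^ k) q.1 q.1)⁻¹)

/-- `∇f(z) = (∇f_1(z_1), …, ∇f_n(z_n))` block-wise. -/
def gradf {n p : ℕ} (g : Fin n → (Fin p → ℝ) → Fin p → ℝ) (z : Fin n × Fin p → ℝ) :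
    Fin n × Fin p → ℝ :=
  fun q => g q.1 (fun j => z (q.1, j)) q.2

/-- `x*_vec = 1_n ⊗ x*`. -/
def starVec (n p : ℕ) (xstar : Fin p → ℝ) : Fin n × Fin p → ℝ := fun q => xstar q.2

end

/- ======================= auxiliary lemmas ======================= -/

set_option linter.unusedSectionVars false
set_option linter.unusedVariables false
set_option maxHeartbeats 1000000

open Finset

section EucAux
variable {ι : Type*} [Fintype ι]

lemma eucNorm_eq_norm (z : ι → ℝ) :
    eucNorm z = ‖(WithLp.equiv 2 (ι → ℝ)).symm z‖ := by
  rw [eucNorm, EuclideanSpace.norm_eq]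
  congr 1
  refine Finset.sum_congr rfl fun i _ => ?_
  simp only [WithLp.equiv_symm_apply, WithLp.ofLp_toLp, Real.norm_eq_abs, sq_abs]

lemma eucNorm_nonneg (z : ι → ℝ) : 0 ≤ eucNorm z := Real.sqrt_nonneg _

lemma eucNorm_add_le (z w : ι → ℝ) : eucNorm (z + w) ≤ eucNorm z + eucNorm w := by
  simp only [eucNorm_eq_norm]
  rw [WithLp.equiv_symm_apply, WithLp.toLp_add]
  exact norm_add_le _ _

lemma eucNorm_smul (a : ℝ) (z : ι → ℝ) : eucNorm (a • z) = |a| * eucNorm z := by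
  simp only [eucNorm_eq_norm]
  rw [WithLp.equiv_symm_apply, WithLp.toLp_smul, norm_smul, Real.norm_eq_abs]

lemma eucNorm_eq_zero_iff (z : ι → ℝ) : eucNorm z = 0 ↔ z = 0 := by
  rw [eucNorm_eq_norm, norm_eq_zero]
  constructor
  · intro h; funext i
    have := congrFun (congrArg (WithLp.equiv 2 (ι → ℝ)) h) i
    simpa using this
  · rintro rfl; rfl

lemma abs_le_eucNorm (z : ι → ℝ) (i : ι) : |z i| ≤ eucNorm z := by
  rw [eucNorm, ← Real.sqrt_sq_eq_abs]
  exact Real.sqrt_le_sqrt (Finset.single_le_sum (f := fun j => z j ^ 2)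
    (fun j _ => sq_nonneg _) (Finset.mem_univ i))

lemma eucNorm_le_of_forall {z : ι → ℝ} {B : ℝ} (hB : 0 ≤ B) (h : ∀ i, |z i| ≤ B) :
    eucNorm z ≤ Real.sqrt (Fintype.card ι) * B := by
  rw [eucNorm, ← Real.sqrt_sq hB, ← Real.sqrt_mul (by positivity)]
  apply Real.sqrt_le_sqrt
  calc ∑ i, z i ^ 2 ≤ ∑ _i : ι, B ^ 2 := by
        refine Finset.sum_le_sum fun i _ => ?_
        rw [← sq_abs]
        exact pow_le_pow_left₀ (abs_nonneg _) (h i) 2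
    _ = (Fintype.card ι) * B ^ 2 := by simp [mul_comm]

end EucAux

section OscAux
variable {n : ℕ} [NeZero n]

/-- oscillation of a vector -/
noncomputable def osc (v : Fin n → ℝ) : ℝ :=
  (Finset.univ.sup' Finset.univ_nonempty v) - (Finset.univ.inf' Finset.univ_nonempty v)

lemma osc_nonneg (v : Fin n → ℝ) : 0 ≤ osc v := by
  have i : Fin n := ⟨0, Nat.pos_of_ne_zero (NeZero.ne n)⟩
  have h1 : Finset.univ.inf' Finset.univ_nonempty v ≤ v i :=
    Finset.inf'_le v (Finset.mem_univ i)
  have h2 : v i ≤ Finset.univ.sup' Finset.univ_nonempty v :=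
    Finset.le_sup' v (Finset.mem_univ i)
  simp only [osc]; linarith

lemma sub_le_osc (v : Fin n → ℝ) (i l : Fin n) : v i - v l ≤ osc v := by
  have h1 : v i ≤ Finset.univ.sup' Finset.univ_nonempty v :=
    Finset.le_sup' v (Finset.mem_univ i)
  have h2 : Finset.univ.inf' Finset.univ_nonempty v ≤ v l :=
    Finset.inf'_le v (Finset.mem_univ l)
  simp only [osc]; linarith

lemma abs_sub_le_osc (v : Fin n → ℝ) (i l : Fin n) : |v i - v l| ≤ osc v := by
  rw [abs_sub_le_iff]
  exact ⟨sub_le_osc v i l, sub_le_osc v l i⟩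

variable (A : Matrix (Fin n) (Fin n) ℝ)

lemma rowsum_mul (B : Matrix (Fin n) (Fin n) ℝ) (hA : ∀ i, ∑ j, A i j = 1)
    (hB : ∀ i, ∑ j, B i j = 1) : ∀ i, ∑ j, (A * B) i j = 1 := by
  intro i
  simp only [Matrix.mul_apply]
  rw [Finset.sum_comm]
  calc ∑ l, ∑ j, A i l * B l j = ∑ l, A i l * ∑ j, B l j := by
        refine Finset.sum_congr rfl fun l _ => ?_; rw [Finset.mul_sum]
    _ = 1 := by simp only [hB, mul_one]; exact hA i

lemma rowsum_pow (hA : ∀ i, ∑ j, A i j = 1) : ∀ k i, ∑ j, (A ^ k) i j = 1 := by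
  intro k
  induction k with
  | zero => intro i; simp [Matrix.one_apply]
  | succ k ih =>
    intro i
    rw [pow_succ']
    exact rowsum_mul A (A ^ k) hA ih i

lemma nonneg_mul (B : Matrix (Fin n) (Fin n) ℝ) (hA : ∀ i j, 0 ≤ A i j)
    (hB : ∀ i j, 0 ≤ B i j) : ∀ i j, 0 ≤ (A * B) i j := by
  intro i j
  rw [Matrix.mul_apply]
  exact Finset.sum_nonneg fun l _ => mul_nonneg (hA i l) (hB l j)

lemma nonneg_pow (hA : ∀ i j, 0 ≤ A i j) : ∀ k i j, 0 ≤ (A ^ k) i j := by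
  intro k
  induction k with
  | zero => intro i j; rw [pow_zero]; by_cases h : i = j <;> simp [Matrix.one_apply, h]
  | succ k ih => rw [pow_succ']; exact nonneg_mul A (A ^ k) hA ih

/-- key Doeblin-type bound: entries ≥ δ ⇒ osc contraction -/
lemma osc_mulVec_le_of_pos {δ : ℝ} (hA0 : ∀ i j, 0 ≤ A i j) (hA1 : ∀ i, ∑ j, A i j = 1)
    (hδ : ∀ i j, δ ≤ A i j) (hδ0 : 0 ≤ δ) (v : Fin n → ℝ) :
    osc (A.mulVec v) ≤ (1 - n * δ) * osc v := by
  set M := Finset.univ.sup' Finset.univ_nonempty v with hM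
  set m := Finset.univ.inf' Finset.univ_nonempty v with hm
  have hub : ∀ i, A.mulVec v i ≤ (1 - n * δ) * M + δ * ∑ j, v j := by
    intro i
    have : A.mulVec v i = (∑ j, (A i j - δ) * v j) + δ * ∑ j, v j := by
      simp only [Matrix.mulVec, dotProduct]
      rw [Finset.mul_sum, ← Finset.sum_add_distrib]
      refine Finset.sum_congr rfl fun j _ => by ring
    rw [this]
    have h1 : ∑ j, (A i j - δ) * v j ≤ ∑ j, (A i j - δ) * M := by
      refine Finset.sum_le_sum fun j _ => ?_
      exact mul_le_mul_of_nonneg_left (Finset.le_sup' v (Finset.mem_univ j))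
        (by linarith [hδ i j])
    have h2 : ∑ j, (A i j - δ) * M = (1 - n * δ) * M := by
      rw [← Finset.sum_mul]
      congr 1
      rw [Finset.sum_sub_distrib, hA1 i]
      simp [Finset.card_univ]
    linarith
  have hlb : ∀ i, (1 - n * δ) * m + δ * ∑ j, v j ≤ A.mulVec v i := by
    intro i
    have : A.mulVec v i = (∑ j, (A i j - δ) * v j) + δ * ∑ j, v j := by
      simp only [Matrix.mulVec, dotProduct]
      rw [Finset.mul_sum, ← Finset.sum_add_distrib]
      refine Finset.sum_congr rfl fun j _ => by ring
    rw [this]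
    have h1 : ∑ j, (A i j - δ) * m ≤ ∑ j, (A i j - δ) * v j := by
      refine Finset.sum_le_sum fun j _ => ?_
      exact mul_le_mul_of_nonneg_left (Finset.inf'_le v (Finset.mem_univ j))
        (by linarith [hδ i j])
    have h2 : ∑ j, (A i j - δ) * m = (1 - n * δ) * m := by
      rw [← Finset.sum_mul]
      congr 1
      rw [Finset.sum_sub_distrib, hA1 i]
      simp [Finset.card_univ]
    linarith
  have hsup : Finset.univ.sup' Finset.univ_nonempty (A.mulVec v) ≤
      (1 - n * δ) * M + δ * ∑ j, v j :=
    Finset.sup'_le _ _ fun i _ => hub i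
  have hinf : (1 - n * δ) * m + δ * ∑ j, v j ≤
      Finset.univ.inf' Finset.univ_nonempty (A.mulVec v) :=
    Finset.le_inf' _ _ fun i _ => hlb i
  have : osc (A.mulVec v) = Finset.univ.sup' Finset.univ_nonempty (A.mulVec v) -
      Finset.univ.inf' Finset.univ_nonempty (A.mulVec v) := rfl
  rw [this, osc]
  rw [← hM, ← hm]
  nlinarith [hsup, hinf]

lemma osc_mulVec_le (hA0 : ∀ i j, 0 ≤ A i j) (hA1 : ∀ i, ∑ j, A i j = 1) (v : Fin n → ℝ) :
    osc (A.mulVec v) ≤ osc v := by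
  have := osc_mulVec_le_of_pos A (δ := 0) hA0 hA1 (fun i j => hA0 i j) le_rfl v
  simpa using this

lemma osc_pow_le (hA0 : ∀ i j, 0 ≤ A i j) (hA1 : ∀ i, ∑ j, A i j = 1)
    {m : ℕ} (hm : 0 < m) {θ : ℝ} (hθ0 : 0 ≤ θ)
    (hcontr : ∀ v, osc ((A ^ m).mulVec v) ≤ θ * osc v) :
    ∀ k v, osc ((A ^ k).mulVec v) ≤ θ ^ (k / m) * osc v := by
  intro k
  induction k using Nat.strong_induction_on with
  | _ k ih =>
    intro v
    by_cases hk : k < m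
    · rw [Nat.div_eq_of_lt hk, pow_zero, one_mul]
      exact osc_mulVec_le (A ^ k) (nonneg_pow A hA0 k) (rowsum_pow A hA1 k) v
    · have hmk : m ≤ k := le_of_not_gt hk
      have hsplit : A ^ k = A ^ m * A ^ (k - m) := by
        rw [← pow_add]; congr 1; omega
      rw [hsplit, ← Matrix.mulVec_mulVec]
      calc osc ((A ^ m).mulVec ((A ^ (k - m)).mulVec v))
          ≤ θ * osc ((A ^ (k - m)).mulVec v) := hcontr _
        _ ≤ θ * (θ ^ ((k - m) / m) * osc v) := by
            exact mul_le_mul_of_nonneg_left (ih (k - m) (by omega) v) hθ0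
        _ = θ ^ (k / m) * osc v := by
            rw [← mul_assoc, ← pow_succ', Nat.div_eq_sub_div hm hmk]

lemma vecMul_pow (π : Fin n → ℝ) (hπA : Matrix.vecMul π A = π) :
    ∀ k, Matrix.vecMul π (A ^ k) = π := by
  intro k
  induction k with
  | zero => simp
  | succ k ih => rw [pow_succ, ← Matrix.vecMul_vecMul, ih, hπA]

/-- main geometric entrywise bound -/
lemma entry_geom_bound (hA0 : ∀ i j, 0 ≤ A i j) (hA1 : ∀ i, ∑ j, A i j = 1)
    {m : ℕ} (hm : 0 < m) {δ : ℝ} (hδpos : 0 < δ) (hδle : ∀ i j, δ ≤ (A ^ m) i j)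
    (π : Fin n → ℝ) (hπ0 : ∀ i, 0 ≤ π i) (hπ1 : ∑ i, π i = 1)
    (hπA : Matrix.vecMul π A = π) :
    ∃ ρ c : ℝ, 0 < ρ ∧ ρ < 1 ∧ 1 ≤ c ∧ ∀ k i j, |(A ^ k) i j - π j| ≤ c * ρ ^ k := by
  have i0 : Fin n := ⟨0, Nat.pos_of_ne_zero (NeZero.ne n)⟩
  have hnδ : (n : ℝ) * δ ≤ 1 := by
    have h := rowsum_pow A hA1 m i0
    have : (n : ℝ) * δ = ∑ _j : Fin n, δ := by simp [Finset.card_univ, mul_comm]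
    rw [this, ← h]
    exact Finset.sum_le_sum fun j _ => hδle i0 j
  set θ' : ℝ := max (1 - n * δ) (1/2) with hθ'
  have hθ'0 : 0 < θ' := lt_of_lt_of_le (by norm_num) (le_max_right _ _)
  have hθ'1 : θ' < 1 := by
    apply max_lt
    · have : 0 < (n : ℝ) * δ := by
        have : 0 < (n : ℝ) := by exact_mod_cast Nat.pos_of_ne_zero (NeZero.ne n)
        positivity
      linarith
    · norm_num
  have hcontr : ∀ v, osc ((A ^ m).mulVec v) ≤ θ' * osc v := by
    intro v
    calc osc ((A ^ m).mulVec v) ≤ (1 - n * δ) * osc v :=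
          osc_mulVec_le_of_pos (A ^ m) (nonneg_pow A hA0 m) (rowsum_pow A hA1 m)
            hδle (le_of_lt hδpos) v
      _ ≤ θ' * osc v := mul_le_mul_of_nonneg_right (le_max_left _ _) (osc_nonneg v)
  set ρ : ℝ := θ' ^ ((m : ℝ)⁻¹) with hρ
  have hρ0 : 0 < ρ := Real.rpow_pos_of_pos hθ'0 _
  have hρ1 : ρ < 1 := by
    apply Real.rpow_lt_one (le_of_lt hθ'0) hθ'1
    positivity
  have hρm : ρ ^ m = θ' := by
    rw [hρ, ← Real.rpow_natCast (θ' ^ ((m:ℝ)⁻¹)) m, ← Real.rpow_mul (le_of_lt hθ'0),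
      inv_mul_cancel₀ (by exact_mod_cast hm.ne' : (m:ℝ) ≠ 0), Real.rpow_one]
  refine ⟨ρ, θ'⁻¹, hρ0, hρ1, (one_le_inv₀ hθ'0).2 (le_of_lt hθ'1), ?_⟩
  intro k i j
  set w : Fin n → ℝ := (A ^ k).mulVec (Pi.single j 1) with hw
  have hwi : ∀ i', w i' = (A ^ k) i' j := by
    intro i'
    simp [hw, Matrix.mulVec, dotProduct, Pi.single_apply, mul_comm]
  have hπj : π j = ∑ l, π l * w l := by
    have h := congrFun (vecMul_pow A π hπA k) j
    simp only [Matrix.vecMul, dotProduct] at h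
    rw [← h]
    refine Finset.sum_congr rfl fun l _ => ?_
    rw [hwi l]
  have habs : |(A ^ k) i j - π j| ≤ osc w := by
    rw [← hwi i, hπj]
    have heq : w i - ∑ l, π l * w l = ∑ l, π l * (w i - w l) := by
      have h1 : ∑ l, π l * (w i - w l) = (∑ l, π l) * w i - ∑ l, π l * w l := by
        rw [Finset.sum_mul, ← Finset.sum_sub_distrib]
        exact Finset.sum_congr rfl fun l _ => by ring
      rw [h1, hπ1, one_mul]
    rw [heq]
    calc |∑ l, π l * (w i - w l)| ≤ ∑ l, |π l * (w i - w l)| :=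
          Finset.abs_sum_le_sum_abs _ _
      _ ≤ ∑ l, π l * osc w := by
          refine Finset.sum_le_sum fun l _ => ?_
          rw [abs_mul, abs_of_nonneg (hπ0 l)]
          exact mul_le_mul_of_nonneg_left (abs_sub_le_osc w i l) (hπ0 l)
      _ = osc w := by rw [← Finset.sum_mul, hπ1, one_mul]
  have hoscw : osc w ≤ θ' ^ (k / m) := by
    have h1 := osc_pow_le A hA0 hA1 hm (le_of_lt hθ'0) hcontr k (Pi.single j 1)
    have h2 : osc (Pi.single j (1:ℝ) : Fin n → ℝ) ≤ 1 := by
      have hsup : Finset.univ.sup' Finset.univ_nonempty (Pi.single j (1:ℝ)) ≤ 1 :=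
        Finset.sup'_le _ _ fun l _ => by
          by_cases h : l = j <;> simp [Pi.single_apply, h]
      have hinf : (0:ℝ) ≤ Finset.univ.inf' Finset.univ_nonempty (Pi.single j (1:ℝ)) :=
        Finset.le_inf' _ _ fun l _ => by
          by_cases h : l = j <;> simp [Pi.single_apply, h]
      simp only [osc]; linarith
    calc osc w ≤ θ' ^ (k/m) * osc (Pi.single j (1:ℝ)) := h1
      _ ≤ θ' ^ (k/m) * 1 := mul_le_mul_of_nonneg_left h2 (by positivity)
      _ = θ' ^ (k/m) := mul_one _
  have hgeom : θ' ^ (k / m) ≤ θ'⁻¹ * ρ ^ k := by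
    have h1 : θ' ^ (k/m + 1) ≤ ρ ^ k := by
      have he : θ' ^ (k/m+1) = ρ ^ (m * (k/m+1)) := by rw [pow_mul, hρm]
      rw [he]
      refine pow_le_pow_of_le_one (le_of_lt hρ0) (le_of_lt hρ1) ?_
      have h3 := Nat.div_add_mod k m
      have h4 := Nat.mod_lt k hm
      have h5 : m * (k/m+1) = m*(k/m) + m := by ring
      omega
    have h2 : θ' ^ (k/m) = θ'⁻¹ * θ' ^ (k/m + 1) := by
      rw [pow_succ, ← mul_assoc]
      field_simp
    rw [h2]
    exact mul_le_mul_of_nonneg_left h1 (by positivity)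
  calc |(A ^ k) i j - π j| ≤ θ' ^ (k/m) := le_trans habs hoscw
    _ ≤ θ'⁻¹ * ρ ^ k := hgeom

end OscAux

section PosPow
variable {n : ℕ} (A : Matrix (Fin n) (Fin n) ℝ)

lemma pow_entry_mono (B : Matrix (Fin n) (Fin n) ℝ) (hB0 : ∀ i j, 0 ≤ B i j)
    (hBA : ∀ i j, B i j ≤ A i j) :
    ∀ k, (∀ i j, 0 ≤ (B ^ k) i j) ∧ (∀ i j, (B ^ k) i j ≤ (A ^ k) i j) := by
  intro k
  induction k with
  | zero => constructor <;> intro i j <;> by_cases h : i = j <;>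
      simp [pow_zero, Matrix.one_apply, h]
  | succ k ih =>
    obtain ⟨ih0, ihle⟩ := ih
    constructor
    · intro i j
      rw [pow_succ, Matrix.mul_apply]
      exact Finset.sum_nonneg fun l _ => mul_nonneg (ih0 i l) (hB0 l j)
    · intro i j
      rw [pow_succ, pow_succ, Matrix.mul_apply, Matrix.mul_apply]
      refine Finset.sum_le_sum fun l _ => ?_
      exact mul_le_mul (ihle i l) (hBA l j) (hB0 l j)
        (le_trans (ih0 i l) (ihle i l))

lemma pos_persist (hA0 : ∀ i j, 0 ≤ A i j) (hd : ∀ i, 0 < A i i) :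
    ∀ k i j, 0 < (A ^ k) i j → ∀ k', k ≤ k' → 0 < (A ^ k') i j := by
  intro k i j hk k' hkk'
  induction k' , hkk' using Nat.le_induction with
  | base => exact hk
  | succ k' hkk' ih =>
    rw [pow_succ, Matrix.mul_apply]
    have hterm : 0 < (A ^ k') i j * A j j := mul_pos ih (hd j)
    have : (A ^ k') i j * A j j ≤ ∑ l, (A ^ k') i l * A l j := by
      refine Finset.single_le_sum (f := fun l => (A ^ k') i l * A l j) ?_ (Finset.mem_univ j)
      intro l _
      exact mul_nonneg ((pow_entry_mono A A hA0 (fun _ _ => le_rfl) k').1 i l) (hA0 l j)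
    linarith

lemma exists_pos_pow (hA0 : ∀ i j, 0 ≤ A i j) (hd : ∀ i, 0 < A i i)
    (hex : ∀ i j, ∃ k, 0 < (A ^ k) i j) :
    ∃ m, 0 < m ∧ ∀ i j, 0 < (A ^ m) i j := by
  set m := (Finset.univ.sup fun q : Fin n × Fin n => (hex q.1 q.2).choose) + 1 with hm
  refine ⟨m, Nat.succ_pos _, fun i j => ?_⟩
  have hc := (hex i j).choose_spec
  refine pos_persist A hA0 hd _ i j hc m ?_
  have : (hex i j).choose ≤ Finset.univ.sup fun q : Fin n × Fin n => (hex q.1 q.2).choose :=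
    Finset.le_sup (f := fun q : Fin n × Fin n => (hex q.1 q.2).choose) (Finset.mem_univ (i, j))
  omega
end PosPow

section KronAux
variable {n p : ℕ}

lemma kron_pow (X : Matrix (Fin n) (Fin n) ℝ) (k : ℕ) :
    (X ⊗ₖ (1 : Matrix (Fin p) (Fin p) ℝ)) ^ k = (X ^ k) ⊗ₖ (1 : Matrix (Fin p) (Fin p) ℝ) := by
  induction k with
  | zero => rw [pow_zero, pow_zero, Matrix.one_kronecker_one]
  | succ k ih =>
    rw [pow_succ, pow_succ, ih, ← Matrix.mul_kronecker_mul, Matrix.one_mul]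

lemma mulVec_entry_bound {ι : Type*} [Fintype ι] (Y : Matrix ι ι ℝ) {b : ℝ}
    (hb : ∀ q r, |Y q r| ≤ b) (v : ι → ℝ) (q : ι) :
    |Y.mulVec v q| ≤ b * ∑ r, |v r| := by
  calc |Y.mulVec v q| = |∑ r, Y q r * v r| := rfl
    _ ≤ ∑ r, |Y q r * v r| := Finset.abs_sum_le_sum_abs _ _
    _ ≤ ∑ r, b * |v r| := by
        refine Finset.sum_le_sum fun r _ => ?_
        rw [abs_mul]
        exact mul_le_mul_of_nonneg_right (hb q r) (abs_nonneg _)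
    _ = b * ∑ r, |v r| := by rw [Finset.mul_sum]
end KronAux

section NormConstr
variable {ι : Type*} [Fintype ι] [DecidableEq ι]

lemma norm_construction (M : Matrix ι ι ℝ) (K ρ : ℝ) (hK : 0 ≤ K)
    (hρ0 : 0 ≤ ρ) (hρ1 : ρ < 1)
    (hbound : ∀ k v, eucNorm ((M ^ k).mulVec v) ≤ K * ρ ^ k * eucNorm v) :
    ∃ N : (ι → ℝ) → ℝ,
      (∀ z w, N (z + w) ≤ N z + N w) ∧
      (∀ (a : ℝ) z, N (a • z) = |a| * N z) ∧
      (∀ z, N z = 0 ↔ z = 0) ∧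
      (∀ z, eucNorm z ≤ N z) ∧
      (∀ z, N (M.mulVec z) ≤ ((1 + ρ) / 2) * N z) := by
  set σ : ℝ := (1 + ρ) / 2 with hσ
  have hσ0 : 0 < σ := by rw [hσ]; linarith
  have hσ1 : σ < 1 := by rw [hσ]; linarith
  have hρσ : ρ < σ := by rw [hσ]; linarith
  set f : (ι → ℝ) → ℕ → ℝ := fun z k => (1 / σ) ^ k * eucNorm ((M ^ k).mulVec z) with hf
  have hf0 : ∀ z k, 0 ≤ f z k := fun z k =>
    mul_nonneg (by positivity) (eucNorm_nonneg _)
  have hfle : ∀ z k, f z k ≤ (K * eucNorm z) * (ρ / σ) ^ k := by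
    intro z k
    have h1 : f z k ≤ (1 / σ) ^ k * (K * ρ ^ k * eucNorm z) :=
      mul_le_mul_of_nonneg_left (hbound k z) (by positivity)
    calc f z k ≤ (1 / σ) ^ k * (K * ρ ^ k * eucNorm z) := h1
      _ = (K * eucNorm z) * (ρ / σ) ^ k := by
          rw [div_eq_mul_one_div ρ σ, mul_pow]
          ring
  have hsum : ∀ z, Summable (f z) := by
    intro z
    refine Summable.of_nonneg_of_le (hf0 z) (hfle z) ?_
    exact (summable_geometric_of_lt_one (by positivity)
      ((div_lt_one hσ0).mpr hρσ)).mul_left _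
  refine ⟨fun z => ∑' k, f z k, ?_, ?_, ?_, ?_, ?_⟩
  · intro z w
    have h1 : ∀ k, f (z + w) k ≤ f z k + f w k := by
      intro k
      rw [hf]
      simp only
      rw [Matrix.mulVec_add, ← mul_add]
      exact mul_le_mul_of_nonneg_left (eucNorm_add_le _ _) (by positivity)
    calc ∑' k, f (z + w) k ≤ ∑' k, (f z k + f w k) :=
          Summable.tsum_le_tsum h1 (hsum _) ((hsum z).add (hsum w))
      _ = (∑' k, f z k) + ∑' k, f w k := Summable.tsum_add (hsum z) (hsum w)
  · intro a z
    have h1 : ∀ k, f (a • z) k = |a| * f z k := by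
      intro k
      rw [hf]
      simp only
      rw [Matrix.mulVec_smul, eucNorm_smul]
      ring
    calc ∑' k, f (a • z) k = ∑' k, |a| * f z k := by simp_rw [h1]
      _ = |a| * ∑' k, f z k := tsum_mul_left
  · intro z
    constructor
    · intro h
      have h' : ∑' k, f z k = 0 := h
      have h1 : eucNorm z ≤ ∑' k, f z k := by
        have := Summable.le_tsum (hsum z) 0 (fun k _ => hf0 z k)
        simpa [hf, Matrix.one_mulVec] using this
      rw [h'] at h1
      exact (eucNorm_eq_zero_iff z).mp (le_antisymm h1 (eucNorm_nonneg z))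
    · rintro rfl
      have h0 : ∀ k, f 0 k = 0 := by
        intro k
        rw [hf]
        simp [Matrix.mulVec_zero, (eucNorm_eq_zero_iff (0 : ι → ℝ)).mpr rfl]
      show ∑' k, f 0 k = 0
      simp_rw [h0, tsum_zero]
  · intro z
    have := Summable.le_tsum (hsum z) 0 (fun k _ => hf0 z k)
    simpa [hf, Matrix.one_mulVec] using this
  · intro z
    have hshift : ∀ k, f (M.mulVec z) k = σ * f z (k + 1) := by
      intro k
      rw [hf]
      simp only
      rw [Matrix.mulVec_mulVec, ← pow_succ]
      rw [pow_succ (1/σ)]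
      have hσne : σ ≠ 0 := ne_of_gt hσ0
      field_simp
    have h1 : ∑' k, f (M.mulVec z) k = σ * ∑' k, f z (k + 1) := by
      simp_rw [hshift]; exact tsum_mul_left
    have h2 : ∑' k, f z k = f z 0 + ∑' k, f z (k + 1) := Summable.tsum_eq_zero_add (hsum z)
    show ∑' k, f (M.mulVec z) k ≤ (1 + ρ)/2 * ∑' k, f z k
    rw [h1]
    have h3 : ∑' k, f z (k+1) ≤ ∑' k, f z k := by rw [h2]; linarith [hf0 z 0]
    exact mul_le_mul_of_nonneg_left h3 (le_of_lt hσ0)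
end NormConstr

/- ======================= main theorem ======================= -/

/-- for `C̄ = (1−αβ)I_n + αβ R̄` one has `C̄^k → 1_n π^T` (entrywise), and
there exist a norm `N` on `ℝ^{np}` dominating the Euclidean norm and `σ ∈ (0,1)` with
`N(Cz − V_∞ z) ≤ σ N(z − V_∞ z)` for all `z`, where `C = C̄ ⊗ I_p`. -/
theorem stmt3 (n p : ℕ) (hn : 1 ≤ n) (hp : 1 ≤ p) (Rb : Matrix (Fin n) (Fin n) ℝ)
    (hnonneg : ∀ i j, 0 ≤ Rb i j) (hrow : ∀ i, ∑ j, Rb i j = 1)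
    (hdiag : ∀ i, 0 < Rb i i)
    (hirr : ∀ i j, ∃ k : ℕ, 0 < (Rb ^ k) i j)
    (π : Fin n → ℝ) (hπpos : ∀ i, 0 < π i) (hπsum : ∑ i, π i = 1)
    (hπstat : Matrix.vecMul π Rb = π)
    (α β : ℝ) (hα : 0 < α) (hβ : 0 < β) (hαβ1 : α * β < 1) :
    (∀ i j, Tendsto
        (fun k => ((((1 - α * β) • (1 : Matrix (Fin n) (Fin n) ℝ) + (α * β) • Rb)) ^ k) i j)
        atTop (nhds (π j))) ∧
    ∃ (N : (Fin n × Fin p → ℝ) → ℝ) (σ : ℝ),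
      (∀ z w, N (z + w) ≤ N z + N w) ∧
      (∀ (a : ℝ) z, N (a • z) = |a| * N z) ∧
      (∀ z, N z = 0 ↔ z = 0) ∧
      (∀ z, eucNorm z ≤ N z) ∧
      0 < σ ∧ σ < 1 ∧
      ∀ z, N ((((1 - α * β) • (1 : Matrix (Fin n) (Fin n) ℝ) + (α * β) • Rb)
              ⊗ₖ (1 : Matrix (Fin p) (Fin p) ℝ)).mulVec z - (VinfK n p π).mulVec z) ≤
        σ * N (z - (VinfK n p π).mulVec z) := by
  haveI : NeZero n := ⟨by omega⟩
  set ab : ℝ := α * β with hab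
  have hab0 : 0 < ab := mul_pos hα hβ
  set C : Matrix (Fin n) (Fin n) ℝ := (1 - ab) • (1 : Matrix (Fin n) (Fin n) ℝ) + ab • Rb
    with hC
  have hCapply : ∀ i j, C i j = (1 - ab) * (1 : Matrix (Fin n) (Fin n) ℝ) i j + ab * Rb i j := by
    intro i j
    simp [hC, Matrix.add_apply, Matrix.smul_apply, smul_eq_mul]
  have hC0 : ∀ i j, 0 ≤ C i j := by
    intro i j
    rw [hCapply]
    have h1 : 0 ≤ (1 : Matrix (Fin n) (Fin n) ℝ) i j := by
      by_cases h : i = j <;> simp [Matrix.one_apply, h]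
    have := hnonneg i j
    nlinarith [hαβ1]
  have hC1 : ∀ i, ∑ j, C i j = 1 := by
    intro i
    simp only [hCapply]
    rw [Finset.sum_add_distrib, ← Finset.mul_sum, ← Finset.mul_sum, hrow]
    have : ∑ j, (1 : Matrix (Fin n) (Fin n) ℝ) i j = 1 := by
      simp [Matrix.one_apply]
    rw [this]
    ring
  have hCd : ∀ i, 0 < C i i := by
    intro i
    rw [hCapply]
    simp only [Matrix.one_apply_eq]
    nlinarith [hdiag i, hαβ1]
  have hπC : Matrix.vecMul π C = π := by
    funext j
    simp only [Matrix.vecMul, dotProduct]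
    have h1 : ∀ l, π l * C l j = (1 - ab) * (π l * (1 : Matrix (Fin n) (Fin n) ℝ) l j)
        + ab * (π l * Rb l j) := by
      intro l; rw [hCapply]; ring
    simp_rw [h1]
    rw [Finset.sum_add_distrib, ← Finset.mul_sum, ← Finset.mul_sum]
    have h2 : ∑ l, π l * (1 : Matrix (Fin n) (Fin n) ℝ) l j = π j := by
      simp [Matrix.one_apply, mul_ite]
    have h3 : ∑ l, π l * Rb l j = π j := by
      have := congrFun hπstat j
      simpa [Matrix.vecMul, dotProduct] using this
    rw [h2, h3]
    ring
  -- positivity of some power of C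
  have hCpos : ∀ i j, ∃ k, 0 < (C ^ k) i j := by
    intro i j
    obtain ⟨k, hk⟩ := hirr i j
    refine ⟨k, ?_⟩
    have hmono := pow_entry_mono C (ab • Rb)
      (fun i j => by
        simp only [Matrix.smul_apply, smul_eq_mul]
        exact mul_nonneg (le_of_lt hab0) (hnonneg i j))
      (fun i j => by
        rw [hCapply]
        have h1 : 0 ≤ (1 : Matrix (Fin n) (Fin n) ℝ) i j := by
          by_cases h : i = j <;> simp [Matrix.one_apply, h]
        simp only [Matrix.smul_apply, smul_eq_mul]
        nlinarith [hαβ1]) k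
    have he : ((ab • Rb) ^ k) i j = ab ^ k * (Rb ^ k) i j := by
      rw [smul_pow]
      simp [Matrix.smul_apply, smul_eq_mul]
    have h2 := hmono.2 i j
    rw [he] at h2
    have : 0 < ab ^ k * (Rb ^ k) i j := by positivity
    linarith
  obtain ⟨m, hm0, hmpos⟩ := exists_pos_pow C hC0 hCd hCpos
  -- minimal entry of C ^ m
  haveI : Nonempty (Fin n) := ⟨⟨0, by omega⟩⟩
  set δ : ℝ := Finset.univ.inf' Finset.univ_nonempty
    (fun q : Fin n × Fin n => (C ^ m) q.1 q.2) with hδ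
  have hδpos : 0 < δ := by
    rw [hδ, Finset.lt_inf'_iff]
    exact fun q _ => hmpos q.1 q.2
  have hδle : ∀ i j, δ ≤ (C ^ m) i j := fun i j =>
    Finset.inf'_le (fun q : Fin n × Fin n => (C ^ m) q.1 q.2) (Finset.mem_univ (i, j))
  obtain ⟨ρ, c, hρ0, hρ1, hc1, hbnd⟩ := entry_geom_bound C hC0 hC1 hm0 hδpos hδle π
    (fun i => le_of_lt (hπpos i)) hπsum hπC
  constructor
  · -- part 1
    intro i j
    have hb : ∀ k, ‖(C ^ k) i j - π j‖ ≤ c * ρ ^ k := by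
      intro k
      rw [Real.norm_eq_abs]
      exact hbnd k i j
    have h0 : Tendsto (fun k : ℕ => c * ρ ^ k) atTop (nhds 0) := by
      have := tendsto_pow_atTop_nhds_zero_of_lt_one (le_of_lt hρ0) hρ1
      simpa using this.const_mul c
    have h1 : Tendsto (fun k : ℕ => (C ^ k) i j - π j) atTop (nhds 0) :=
      squeeze_zero_norm hb h0
    have h2 := h1.add (tendsto_const_nhds (x := π j) (f := atTop))
    simpa using h2
  · -- part 2
    set E : Matrix (Fin n) (Fin n) ℝ := Matrix.of (fun _ j => π j) with hE
    have hCkE : ∀ k, C ^ k * E = E := by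
      intro k
      induction k with
      | zero => simp
      | succ k ih =>
        have hCE : C * E = E := by
          ext i j
          rw [Matrix.mul_apply]
          simp only [hE, Matrix.of_apply]
          rw [← Finset.sum_mul, hC1, one_mul]
        rw [pow_succ, Matrix.mul_assoc, hCE, ih]
    have hEC : E * C = E := by
      ext i j
      rw [Matrix.mul_apply]
      simp only [hE, Matrix.of_apply]
      have := congrFun hπC j
      simp only [Matrix.vecMul, dotProduct] at this
      exact this
    have hEE : E * E = E := by
      ext i j
      rw [Matrix.mul_apply]
      simp only [hE, Matrix.of_apply]
      rw [← Finset.sum_mul, hπsum, one_mul]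
    set Mb : Matrix (Fin n) (Fin n) ℝ := C - E with hMb
    have hMbk : ∀ k, 1 ≤ k → Mb ^ k = C ^ k - E := by
      intro k hk
      induction k, hk using Nat.le_induction with
      | base => rw [pow_one, pow_one]
      | succ k hk ih =>
        rw [pow_succ, ih, hMb, Matrix.sub_mul, Matrix.mul_sub, Matrix.mul_sub,
          ← pow_succ, hCkE, hEC, hEE]
        abel
    set c' : ℝ := max c 1 with hc'
    have hc'1 : 1 ≤ c' := le_max_right _ _
    have hMbbound : ∀ k i j, |(Mb ^ k) i j| ≤ c' * ρ ^ k := by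
      intro k i j
      rcases Nat.eq_zero_or_pos k with rfl | hk
      · simp only [pow_zero]
        have h1 : |(1 : Matrix (Fin n) (Fin n) ℝ) i j| ≤ 1 := by
          by_cases h : i = j <;> simp [Matrix.one_apply, h]
        calc |(1 : Matrix (Fin n) (Fin n) ℝ) i j| ≤ 1 := h1
          _ ≤ c' * 1 := by linarith
      · rw [hMbk k hk]
        have : (C ^ k - E) i j = (C ^ k) i j - π j := by
          simp [Matrix.sub_apply, hE]
        rw [this]
        calc |(C ^ k) i j - π j| ≤ c * ρ ^ k := hbnd k i j
          _ ≤ c' * ρ ^ k := by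
              exact mul_le_mul_of_nonneg_right (le_max_left _ _) (by positivity)
    -- the Kronecker matrix
    set MK : Matrix (Fin n × Fin p) (Fin n × Fin p) ℝ :=
      Mb ⊗ₖ (1 : Matrix (Fin p) (Fin p) ℝ) with hMK
    have hMKbound : ∀ k q r, |(MK ^ k) q r| ≤ c' * ρ ^ k := by
      intro k q r
      rw [hMK, kron_pow]
      simp only [Matrix.kroneckerMap_apply]
      rw [abs_mul]
      have h1 : |(1 : Matrix (Fin p) (Fin p) ℝ) q.2 r.2| ≤ 1 := by
        by_cases h : q.2 = r.2 <;> simp [Matrix.one_apply, h]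
      calc |(Mb ^ k) q.1 r.1| * |(1 : Matrix (Fin p) (Fin p) ℝ) q.2 r.2|
          ≤ (c' * ρ ^ k) * 1 := by
            exact mul_le_mul (hMbbound k q.1 r.1) h1 (abs_nonneg _) (by positivity)
        _ = c' * ρ ^ k := mul_one _
    set card : ℕ := Fintype.card (Fin n × Fin p) with hcard
    set K : ℝ := Real.sqrt card * (c' * card) with hK
    have hvecbound : ∀ k (v : Fin n × Fin p → ℝ),
        eucNorm ((MK ^ k).mulVec v) ≤ K * ρ ^ k * eucNorm v := by
      intro k v
      have hsum : ∑ r, |v r| ≤ card * eucNorm v := by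
        calc ∑ r, |v r| ≤ ∑ _r : Fin n × Fin p, eucNorm v :=
              Finset.sum_le_sum fun r _ => abs_le_eucNorm v r
          _ = card * eucNorm v := by simp [hcard, Finset.card_univ]
      have hentry : ∀ q, |(MK ^ k).mulVec v q| ≤ (c' * ρ ^ k) * (card * eucNorm v) := by
        intro q
        calc |(MK ^ k).mulVec v q| ≤ (c' * ρ ^ k) * ∑ r, |v r| :=
              mulVec_entry_bound (MK ^ k) (hMKbound k) v q
          _ ≤ (c' * ρ ^ k) * (card * eucNorm v) := by
              refine mul_le_mul_of_nonneg_left hsum (by positivity)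
      have := eucNorm_le_of_forall (z := (MK ^ k).mulVec v)
        (B := (c' * ρ ^ k) * (card * eucNorm v))
        (mul_nonneg (by positivity) (mul_nonneg (by positivity) (eucNorm_nonneg v))) hentry
      calc eucNorm ((MK ^ k).mulVec v)
          ≤ Real.sqrt card * ((c' * ρ ^ k) * (card * eucNorm v)) := this
        _ = K * ρ ^ k * eucNorm v := by rw [hK]; ring
    obtain ⟨N, hN1, hN2, hN3, hN4, hN5⟩ := norm_construction MK K ρ (by positivity)
      (le_of_lt hρ0) hρ1 hvecbound
    refine ⟨N, (1 + ρ) / 2, hN1, hN2, hN3, hN4, by linarith, by linarith, ?_⟩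
    intro z
    have hMV : MK * (VinfK n p π) = 0 := by
      have hMbE : Mb * E = 0 := by
        have hCE : C * E = E := by simpa [pow_one] using hCkE 1
        rw [hMb, Matrix.sub_mul, hEE, hCE, sub_self]
      rw [hMK]
      show (Mb ⊗ₖ (1 : Matrix (Fin p) (Fin p) ℝ)) *
        (E ⊗ₖ (1 : Matrix (Fin p) (Fin p) ℝ)) = 0
      rw [← Matrix.mul_kronecker_mul, hMbE, Matrix.one_mul, Matrix.zero_kronecker]
    have hLHS : (C ⊗ₖ (1 : Matrix (Fin p) (Fin p) ℝ)).mulVec z - (VinfK n p π).mulVec z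
        = MK.mulVec z := by
      have hsub : C ⊗ₖ (1 : Matrix (Fin p) (Fin p) ℝ) - VinfK n p π = MK := by
        ext q r
        simp only [Matrix.sub_apply, Matrix.kroneckerMap_apply, hMK, hMb, VinfK,
          Matrix.of_apply, hE]
        ring
      rw [← Matrix.sub_mulVec, hsub]
    have hw : MK.mulVec (z - (VinfK n p π).mulVec z) = MK.mulVec z := by
      rw [Matrix.mulVec_sub, Matrix.mulVec_mulVec, hMV, Matrix.zero_mulVec, sub_zero]
    calc N ((C ⊗ₖ (1 : Matrix (Fin p) (Fin p) ℝ)).mulVec z - (VinfK n p π).mulVec z)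
        = N (MK.mulVec (z - (VinfK n p π).mulVec z)) := by rw [hLHS, hw]
      _ ≤ (1 + ρ) / 2 * N (z - (VinfK n p π).mulVec z) := hN5 _
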